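/- (Theorem 1 c), second half.) Let n ≥ 1 and f(X) = X^{1+p^n}. Then S(f) = {y ∈ k : y^{p^{2n}} + y = 0}, a set of exactly p^{2n} elements; equivalently, |G_{∞,1}(X^{1+p^n})| = p^{2n+1}. -/

import Mathlib

open Polynomial

/-- `S(f)`: the set of `y ∈ k` such that `f(X+y) - f(X) - f(y) = P(X) - P(X)^p`
for some polynomial `P` with `P(0) = 0`. -/
def Sf (p : ℕ) {k : Type*} [Field k] (f : k[X]) : Set k :=
  {y | ∃ P : k[X], P.coeff 0 = 0 ∧
    f.comp (X + C y) - f - C (f.eval y) = P - P ^ p}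

/-- If `R - R^p = C a * X` with `R(0) = 0`, then `a = 0`. -/
lemma key_aux (p : ℕ) (hp : p.Prime) {k : Type*} [Field k] (a : k) (R : k[X])
    (h0 : R.coeff 0 = 0) (h : R - R ^ p = C a * X) : a = 0 := by
  by_cases hR : R = 0
  · subst hR
    simp only [zero_pow hp.ne_zero, sub_zero] at h
    have := congrArg (fun q => Polynomial.coeff q 1) h
    simpa using this.symm
  · exfalso
    have hnd : 1 ≤ R.natDegree := by
      rcases Nat.eq_zero_or_pos R.natDegree with h1 | h1
      · obtain ⟨x, hx⟩ := Polynomial.natDegree_eq_zero.mp h1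
        rw [← hx] at hR h0
        simp at h0
        simp [h0] at hR
      · exact h1
    have hlt : R.natDegree < (R ^ p).natDegree := by
      rw [Polynomial.natDegree_pow]
      calc R.natDegree = 1 * R.natDegree := (one_mul _).symm
        _ < p * R.natDegree := by
            exact Nat.mul_lt_mul_of_lt_of_le hp.one_lt le_rfl (by omega)
    have hdeg : (R - R ^ p).natDegree = p * R.natDegree := by
      rw [Polynomial.natDegree_sub_eq_right_of_natDegree_lt hlt, Polynomial.natDegree_pow]
    have h2 : (C a * X : k[X]).natDegree ≤ 1 := by
      apply le_trans (Polynomial.natDegree_mul_le)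
      simp
    rw [h, hdeg] at *
    have : 2 ≤ p * R.natDegree := by
      have := hp.two_le
      nlinarith
    omega

theorem Sf_monomial_one_add_pow (p : ℕ) (hp : p.Prime)
    (k : Type*) [Field k] [IsAlgClosed k] [CharP k p]
    (n : ℕ) (hn : 1 ≤ n) :
    Sf p ((X : k[X]) ^ (1 + p ^ n)) = {y : k | y ^ p ^ (2 * n) + y = 0} ∧
    (Sf p ((X : k[X]) ^ (1 + p ^ n))).ncard = p ^ (2 * n) := by
  haveI : Fact p.Prime := ⟨hp⟩
  have hq2 : p ^ (2 * n) = p ^ n * p ^ n := by rw [two_mul, pow_add]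
  -- the key simplification of the LHS
  have hcomp : ∀ y : k, ((X : k[X]) ^ (1 + p ^ n)).comp (X + C y)
      - X ^ (1 + p ^ n) - C (((X : k[X]) ^ (1 + p ^ n)).eval y)
      = C y * X ^ (p ^ n) + C (y ^ p ^ n) * X := by
    intro y
    rw [Polynomial.X_pow_comp, Polynomial.eval_pow, Polynomial.eval_X]
    have h1 : (X + C y : k[X]) ^ (1 + p ^ n)
        = (X + C y) * (X ^ (p ^ n) + C (y ^ p ^ n)) := by
      rw [pow_add, pow_one, add_pow_char_pow, Polynomial.C_pow]
    rw [h1]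
    have h2 : (X : k[X]) ^ (1 + p ^ n) = X * X ^ (p ^ n) := by rw [pow_add, pow_one]
    have h3 : (C (y ^ (1 + p ^ n)) : k[X]) = C y * C (y ^ p ^ n) := by
      rw [← Polynomial.C_mul, ← pow_succ']
      ring_nf
    rw [h2, h3]
    ring
  have hset : Sf p ((X : k[X]) ^ (1 + p ^ n)) = {y : k | y ^ p ^ (2 * n) + y = 0} := by
    ext y
    simp only [Sf, Set.mem_setOf_eq, hcomp y]
    constructor
    · rintro ⟨P, hP0, hP⟩
      obtain ⟨d, hd⟩ := IsAlgClosed.exists_pow_nat_eq (k := k) y (n := p ^ n)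
        (pow_pos hp.pos n)
      set g : ℕ → k[X] := fun j => C (d ^ p ^ j) * X ^ p ^ j with hg
      have hgp : ∀ j, (g j) ^ p = g (j + 1) := by
        intro j
        simp only [hg, mul_pow, ← Polynomial.C_pow, ← pow_mul, ← pow_succ]
      set S : k[X] := ∑ j ∈ Finset.range n, g j with hS
      have hSsub : S - S ^ p = C d * X - C y * X ^ p ^ n := by
        rw [hS, sum_pow_char]
        rw [← Finset.sum_sub_distrib]
        simp only [hgp]
        rw [Finset.sum_range_sub' g n]
        simp only [hg, pow_zero, pow_one, hd]
      set R : k[X] := P + S with hR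
      have hRsub : R - R ^ p = C (y ^ p ^ n + d) * X := by
        rw [hR, add_pow_char]
        rw [show P + S - (P ^ p + S ^ p) = (P - P ^ p) + (S - S ^ p) by ring,
          hP.symm, hSsub]
        rw [Polynomial.C_add]
        ring
      have hR0 : R.coeff 0 = 0 := by
        rw [hR, Polynomial.coeff_add, hP0, zero_add, hS, Polynomial.finset_sum_coeff]
        apply Finset.sum_eq_zero
        intro j _
        simp only [hg, Polynomial.coeff_C_mul, Polynomial.coeff_X_pow]
        have : p ^ j ≠ 0 := (pow_pos hp.pos j).ne'
        simp [this.symm]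
      have ha := key_aux p hp _ R hR0 hRsub
      have hd2 : y ^ p ^ n = -d := by linear_combination ha
      have hkey : y ^ p ^ (2 * n) = -y := by
        calc y ^ p ^ (2 * n) = (y ^ p ^ n) ^ p ^ n := by rw [hq2, pow_mul]
          _ = ((-1) * d) ^ p ^ n := by rw [hd2]; ring_nf
          _ = (-1) ^ p ^ n * d ^ p ^ n := by rw [mul_pow]
          _ = -y := by rw [neg_one_pow_char_pow k p n, hd]; ring
      show y ^ p ^ (2 * n) + y = 0
      linear_combination hkey
    · intro hy
      have hy' : y ^ p ^ (2 * n) = -y := by linear_combination hy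
      set g : ℕ → k[X] := fun j => C (y ^ p ^ (n + j)) * X ^ p ^ j with hg
      have hgp : ∀ j, (g j) ^ p = g (j + 1) := by
        intro j
        simp only [hg, mul_pow, ← Polynomial.C_pow, ← pow_mul, ← pow_succ]
        rw [show n + (j + 1) = (n + j) + 1 by omega]
      refine ⟨∑ j ∈ Finset.range n, g j, ?_, ?_⟩
      · rw [Polynomial.finset_sum_coeff]
        apply Finset.sum_eq_zero
        intro j _
        simp only [hg, Polynomial.coeff_C_mul, Polynomial.coeff_X_pow]
        have : p ^ j ≠ 0 := (pow_pos hp.pos j).ne'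
        simp [this.symm]
      · rw [sum_pow_char, ← Finset.sum_sub_distrib]
        simp only [hgp]
        rw [Finset.sum_range_sub' g n]
        simp only [hg, pow_zero, pow_one, add_zero, show n + n = 2 * n by ring, ← pow_add]
        rw [hy']
        simp only [map_neg]
        ring
  refine ⟨hset, ?_⟩
  rw [hset]
  -- cardinality of the root set of X^{p^{2n}} + X
  set G : k[X] := X ^ p ^ (2 * n) + X with hG
  have hGdeg : G.natDegree = p ^ (2 * n) := by
    rw [hG]
    have h1 : 1 < p ^ (2 * n) := by
      calc 1 < p := hp.one_lt
        _ = p ^ 1 := (pow_one p).symm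
        _ ≤ p ^ (2 * n) := Nat.pow_le_pow_right hp.pos (by omega)
    rw [Polynomial.natDegree_add_eq_left_of_natDegree_lt (by simpa using h1)]
    exact Polynomial.natDegree_X_pow _
  have hG0 : G ≠ 0 := by
    intro h
    rw [h] at hGdeg
    simp only [Polynomial.natDegree_zero] at hGdeg
    exact absurd hGdeg.symm (pow_pos hp.pos _).ne'
  have hsep : G.Separable := by
    have : G.derivative = 1 := by
      rw [hG]
      simp only [Polynomial.derivative_add, Polynomial.derivative_X_pow,
        Polynomial.derivative_X]
      have hc : ((p ^ (2 * n) : ℕ) : k) = 0 := by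
        push_cast
        rw [CharP.cast_eq_zero k p]
        exact zero_pow (by omega : 2 * n ≠ 0)
      rw [hc]
      simp
    rw [Polynomial.Separable, this]
    exact isCoprime_one_right
  classical
  have heq : {y : k | y ^ p ^ (2 * n) + y = 0} = (G.roots.toFinset : Set k) := by
    ext y
    rw [Set.mem_setOf_eq, Finset.mem_coe, Multiset.mem_toFinset, Polynomial.mem_roots hG0]
    simp only [Set.mem_setOf_eq, Finset.coe_sort_coe, Multiset.mem_toFinset,
      Polynomial.mem_roots hG0, Polynomial.IsRoot.def, hG, Polynomial.eval_add,
      Polynomial.eval_pow, Polynomial.eval_X, Finset.mem_coe]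
  rw [heq, Set.ncard_coe_finset, Multiset.toFinset_card_of_nodup (Polynomial.nodup_roots hsep)]
  rw [IsAlgClosed.card_roots_eq_natDegree, hGdeg]
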